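/- Let F be a linearly ordered field and let α, β, γ be cosets of magnitudes of F. If every element of α is strictly positive (i.e. 0 < x for all x ∈ α) and β ≤ γ, then α * β ≤ α * γ, where * is the Minkowski (pointwise) product of sets (compatibility of the order on cosets with multiplication by strictly positive cosets). -/

import Mathlib

open Pointwise

/-- A *magnitude* of a linearly ordered field `F` is an order-convex additive subgroup of `F`,
given as a set: it contains `0`, is closed under addition and negation, and is order-convex. -/
def IsMagnitude {F : Type*} [Field F] [LinearOrder F] [IsStrictOrderedRing F] (A : Set F) : Prop :=
  (0 : F) ∈ A ∧ (∀ x ∈ A, ∀ y ∈ A, x + y ∈ A) ∧ (∀ x ∈ A, -x ∈ A) ∧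
    (∀ x ∈ A, ∀ y ∈ A, ∀ z : F, x ≤ z → z ≤ y → z ∈ A)

/-- Order relation on subsets of `F`: `S ≤ T` iff every element of `S` is below some element of `T`. -/
def SetLE {F : Type*} [Field F] [LinearOrder F] [IsStrictOrderedRing F] (S T : Set F) : Prop :=
  ∀ x ∈ S, ∃ y ∈ T, x ≤ y

theorem coset_le_mul_compat_of_pos {F : Type*} [Field F] [LinearOrder F] [IsStrictOrderedRing F]
    (A B C : Set F) (hA : IsMagnitude A) (hB : IsMagnitude B) (hC : IsMagnitude C)
    (a b c : F) (hpos : ∀ x ∈ ({a} + A), (0 : F) < x)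
    (h : SetLE ({b} + B) ({c} + C)) :
    SetLE (({a} + A) * ({b} + B)) (({a} + A) * ({c} + C)) := by
  intro x hx
  obtain ⟨p, hp, q, hq, rfl⟩ := hx
  obtain ⟨r, hr, hqr⟩ := h q hq
  exact ⟨p * r, Set.mul_mem_mul hp hr, mul_le_mul_of_nonneg_left hqr (hpos p hp).le⟩
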